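/- arXiv:2309.11030 — 3 statements merged into one kernel-verified Lean document; each statement's English description precedes it below -/
import Mathlib

section
/- The Poisson commutant of the maximal Abelian subalgebra a₍₃₄₎ = span{x₃,x₄} of 𝔠(2) is Abelian: if p, q ∈ ℝ[x₁,…,x₆] satisfy {p,x₃} = {p,x₄} = 0 and {q,x₃} = {q,x₄} = 0, then {p,q} = 0. -/
open MvPolynomial

/-- Structure-constant polynomials `c j k = {x_{j+1}, x_{k+1}}` of the 2D conformal
algebra `𝔠(2)` (indices `0,…,5` correspond to `x₁,…,x₆`). -/
noncomputable def c2Mat : Matrix (Fin 6) (Fin 6) (MvPolynomial (Fin 6) ℝ) :=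
  !![0,            0,            -X 1, X 0,  2 * X 3,      2 * X 2;
     0,            0,            X 0,  X 1,  -(2 * X 2),   2 * X 3;
     X 1,          -X 0,         0,    0,    X 5,          -X 4;
     -X 0,         -X 1,         0,    0,    X 4,          X 5;
     -(2 * X 3),   2 * X 2,      -X 5, -X 4, 0,            0;
     -(2 * X 2),   -(2 * X 3),   X 4,  -X 5, 0,            0]

/-- The Lie–Poisson bracket of `𝔠(2)` on `ℝ[x₁,…,x₆]`:
`{p,q} = ∑_{j,k} c_{jk} (∂p/∂x_j) (∂q/∂x_k)`. -/
noncomputable def pb (p q : MvPolynomial (Fin 6) ℝ) : MvPolynomial (Fin 6) ℝ :=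
  ∑ j : Fin 6, ∑ k : Fin 6, c2Mat j k * pderiv j p * pderiv k q

@[simp] lemma cons_val_five {m : ℕ} {α : Type*} (x : α)
    (u : Fin m.succ.succ.succ.succ.succ → α) :
    Matrix.vecCons x u 5 =
      Matrix.vecHead (Matrix.vecTail (Matrix.vecTail (Matrix.vecTail (Matrix.vecTail u)))) :=
  rfl

@[simp] lemma vecTail_const {n : ℕ} {α : Type*} (a : α) :
    Matrix.vecTail (fun _ : Fin (n + 1) => a) = fun _ => a :=
  rfl

/-- The Poisson commutant of `a₍₃₄₎ = span{x₃,x₄}` is Abelian. -/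
theorem stmt5 (p q : MvPolynomial (Fin 6) ℝ)
    (hp1 : pb p (X 2) = 0) (hp2 : pb p (X 3) = 0)
    (hq1 : pb q (X 2) = 0) (hq2 : pb q (X 3) = 0) :
    pb p q = 0 := by
  have d0 : (X 0 ^ 2 + X 1 ^ 2 : MvPolynomial (Fin 6) ℝ) ≠ 0 := by
    intro h
    have h2 := congrArg (eval fun _ => (1 : ℝ)) h
    simp at h2
  simp [pb, c2Mat, Fin.sum_univ_six, pderiv_X] at hp1 hp2 hq1 hq2
  have key : (X 0 ^ 2 + X 1 ^ 2) * pb p q = 0 := by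
    simp only [pb, c2Mat, Fin.sum_univ_six]
    simp [-mul_eq_zero, Matrix.head_fin_const]
    linear_combination
      ((X 0 ^ 2 + X 1 ^ 2) * pderiv 2 q
        + 2 * (X 3 * (-(X 1 * pderiv 4 q) + X 0 * pderiv 5 q)
             + X 2 * (-(X 1 * pderiv 5 q) - X 0 * pderiv 4 q))) * hp1
      + ((X 0 ^ 2 + X 1 ^ 2) * pderiv 3 q
        + 2 * (X 3 * (X 0 * pderiv 4 q + X 1 * pderiv 5 q)
             + X 2 * (X 0 * pderiv 5 q - X 1 * pderiv 4 q))) * hp2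
      + (-((X 0 ^ 2 + X 1 ^ 2) * pderiv 2 p)
        + 2 * (X 3 * (X 1 * pderiv 4 p - X 0 * pderiv 5 p)
             + X 2 * (X 0 * pderiv 4 p + X 1 * pderiv 5 p))) * hq1
      + (-((X 0 ^ 2 + X 1 ^ 2) * pderiv 3 p)
        + 2 * (X 3 * (-(X 0 * pderiv 4 p) - X 1 * pderiv 5 p)
             + X 2 * (X 1 * pderiv 4 p - X 0 * pderiv 5 p))) * hq2
  exact (mul_eq_zero.mp key).resolve_left d0
end

section
/- Casimir functions of the quadratic Poisson algebra Q₄(2): with A₁ = x₃, A₂ = x₄, A₃ = x₁x₅, A₄ = x₁x₆, A₅ = x₂x₆, A₆ = x₂x₅, each of the polynomials K₁ = A₂, K₂ = A₁² + A₃ + A₅, K₃ = A₄ − A₆ − 2A₁A₂ satisfies {Kᵢ, Aⱼ} = 0 for every 1 ≤ j ≤ 6. -/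
open MvPolynomial

/-- Generators of the quadratic Poisson algebra `Q₄(2)`. -/
noncomputable def A4 : Fin 6 → MvPolynomial (Fin 6) ℝ :=
  ![X 2,
    X 3,
    X 0 * X 4,
    X 0 * X 5,
    X 1 * X 5,
    X 1 * X 4]

lemma v5 {α} (a : α) (u : Fin 5 → α) : Matrix.vecCons a u 5 = u 4 := rfl
lemma v4 {α} (a : α) (u : Fin 4 → α) : Matrix.vecCons a u 4 = u 3 := rfl
lemma v3 {α} (a : α) (u : Fin 3 → α) : Matrix.vecCons a u 3 = u 2 := rfl
lemma v2 {α} (a : α) (u : Fin 2 → α) : Matrix.vecCons a u 2 = u 1 := rfl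
lemma v1 {α} (a : α) (u : Fin 1 → α) : Matrix.vecCons a u 1 = u 0 := rfl

lemma pd2 (i : Fin 6) : pderiv i (2 : MvPolynomial (Fin 6) ℝ) = 0 := by
  rw [show (2 : MvPolynomial (Fin 6) ℝ) = C 2 from (map_ofNat C 2).symm, pderiv_C]

lemma pdX (i j : Fin 6) : pderiv i (X j : MvPolynomial (Fin 6) ℝ) = if i = j then 1 else 0 := by
  rw [pderiv_X, Pi.single_apply]
  split <;> rename_i h <;> [rw [if_pos h.symm]; rw [if_neg (fun hh => h hh.symm)]]

set_option maxHeartbeats 1000000 in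
/-- Casimir functions of the quadratic Poisson algebra `Q₄(2)`. -/
theorem stmt14 :
    (∀ j : Fin 6, pb (A4 1) (A4 j) = 0) ∧
    (∀ j : Fin 6, pb (A4 0 ^ 2 + A4 2 + A4 4) (A4 j) = 0) ∧
    (∀ j : Fin 6, pb (A4 3 - A4 5 - 2 * A4 0 * A4 1) (A4 j) = 0) := by
  refine ⟨?_, ?_, ?_⟩ <;> intro j <;> fin_cases j <;>
  · simp only [pb, c2Mat, A4, pow_two, Fin.sum_univ_six, Matrix.cons_val', Matrix.cons_val_zero,
      Matrix.cons_val_one, Matrix.head_cons, Matrix.empty_val', Matrix.cons_val_fin_one,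
      Matrix.head_fin_const, Matrix.of_apply, Matrix.cons_val_two, Matrix.tail_cons,
      Matrix.cons_val_three, Matrix.cons_val_four, v5, v4, v3, v2, v1, map_mul, map_add,
      map_sub, pdX, pd2]
    simp [v5, v4, v3, v2, v1, pd2]
    try ring
end

section
/- The Poisson commutant of the su(2) subalgebra of 𝔠(2) spanned by x₃, (x₂+x₆)/2 and (x₁+x₅)/2 contains the quadratic invariant φ₁ = x₁² + x₂² + 2x₃² + 2x₄² + x₅² + x₆², and the resulting symmetry algebra is Abelian: {φ₁, x₃} = {φ₁, x₁ + x₅} = {φ₁, x₂ + x₆} = 0, and the three polynomials φ₁, C₁ = x₃² − x₄² + x₁x₅ + x₂x₆, C₂ = 2x₃x₄ + x₂x₅ − x₁x₆ pairwise Poisson-commute. -/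
open MvPolynomial

lemma c2_00 : c2Mat 0 0 = 0 := rfl
lemma c2_01 : c2Mat 0 1 = 0 := rfl
lemma c2_02 : c2Mat 0 2 = -X 1 := rfl
lemma c2_03 : c2Mat 0 3 = X 0 := rfl
lemma c2_04 : c2Mat 0 4 = 2 * X 3 := rfl
lemma c2_05 : c2Mat 0 5 = 2 * X 2 := rfl
lemma c2_10 : c2Mat 1 0 = 0 := rfl
lemma c2_11 : c2Mat 1 1 = 0 := rfl
lemma c2_12 : c2Mat 1 2 = X 0 := rfl
lemma c2_13 : c2Mat 1 3 = X 1 := rfl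
lemma c2_14 : c2Mat 1 4 = -(2 * X 2) := rfl
lemma c2_15 : c2Mat 1 5 = 2 * X 3 := rfl
lemma c2_20 : c2Mat 2 0 = X 1 := rfl
lemma c2_21 : c2Mat 2 1 = -X 0 := rfl
lemma c2_22 : c2Mat 2 2 = 0 := rfl
lemma c2_23 : c2Mat 2 3 = 0 := rfl
lemma c2_24 : c2Mat 2 4 = X 5 := rfl
lemma c2_25 : c2Mat 2 5 = -X 4 := rfl
lemma c2_30 : c2Mat 3 0 = -X 0 := rfl
lemma c2_31 : c2Mat 3 1 = -X 1 := rfl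
lemma c2_32 : c2Mat 3 2 = 0 := rfl
lemma c2_33 : c2Mat 3 3 = 0 := rfl
lemma c2_34 : c2Mat 3 4 = X 4 := rfl
lemma c2_35 : c2Mat 3 5 = X 5 := rfl
lemma c2_40 : c2Mat 4 0 = -(2 * X 3) := rfl
lemma c2_41 : c2Mat 4 1 = 2 * X 2 := rfl
lemma c2_42 : c2Mat 4 2 = -X 5 := rfl
lemma c2_43 : c2Mat 4 3 = -X 4 := rfl
lemma c2_44 : c2Mat 4 4 = 0 := rfl
lemma c2_45 : c2Mat 4 5 = 0 := rfl
lemma c2_50 : c2Mat 5 0 = -(2 * X 2) := rfl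
lemma c2_51 : c2Mat 5 1 = -(2 * X 3) := rfl
lemma c2_52 : c2Mat 5 2 = X 4 := rfl
lemma c2_53 : c2Mat 5 3 = -X 5 := rfl
lemma c2_54 : c2Mat 5 4 = 0 := rfl
lemma c2_55 : c2Mat 5 5 = 0 := rfl

lemma pderiv_two (j : Fin 6) : pderiv j (2 : MvPolynomial (Fin 6) ℝ) = 0 := by
  rw [show (2 : MvPolynomial (Fin 6) ℝ) = C 2 from (map_ofNat C 2).symm, pderiv_C]


set_option maxHeartbeats 2000000 in
/-- The quadratic invariant `φ₁` of the `su(2)` subalgebra of `𝔠(2)` spanned by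
`x₃, (x₂+x₆)/2, (x₁+x₅)/2`, together with the Casimirs `C₁, C₂` of `𝔠(2)`,
pairwise Poisson-commute. -/
theorem stmt16 :
    pb (X 0 ^ 2 + X 1 ^ 2 + 2 * X 2 ^ 2 + 2 * X 3 ^ 2 + X 4 ^ 2 + X 5 ^ 2) (X 2) = 0 ∧
    pb (X 0 ^ 2 + X 1 ^ 2 + 2 * X 2 ^ 2 + 2 * X 3 ^ 2 + X 4 ^ 2 + X 5 ^ 2) (X 0 + X 4) = 0 ∧
    pb (X 0 ^ 2 + X 1 ^ 2 + 2 * X 2 ^ 2 + 2 * X 3 ^ 2 + X 4 ^ 2 + X 5 ^ 2) (X 1 + X 5) = 0 ∧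
    pb (X 0 ^ 2 + X 1 ^ 2 + 2 * X 2 ^ 2 + 2 * X 3 ^ 2 + X 4 ^ 2 + X 5 ^ 2)
      (X 2 ^ 2 - X 3 ^ 2 + X 0 * X 4 + X 1 * X 5) = 0 ∧
    pb (X 0 ^ 2 + X 1 ^ 2 + 2 * X 2 ^ 2 + 2 * X 3 ^ 2 + X 4 ^ 2 + X 5 ^ 2)
      (2 * X 2 * X 3 + X 1 * X 4 - X 0 * X 5) = 0 ∧
    pb (X 2 ^ 2 - X 3 ^ 2 + X 0 * X 4 + X 1 * X 5)
      (2 * X 2 * X 3 + X 1 * X 4 - X 0 * X 5) = 0 := by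
  refine ⟨?_, ?_, ?_, ?_, ?_, ?_⟩ <;>
  · simp only [pb, Fin.sum_univ_six, c2_00, c2_01, c2_02, c2_03, c2_04, c2_05, c2_10, c2_11, c2_12, c2_13, c2_14, c2_15, c2_20, c2_21, c2_22, c2_23, c2_24, c2_25, c2_30, c2_31, c2_32, c2_33, c2_34, c2_35, c2_40, c2_41, c2_42, c2_43, c2_44, c2_45, c2_50, c2_51, c2_52, c2_53, c2_54, c2_55,
      map_add, map_sub, pderiv_mul, Derivation.leibniz_pow, pderiv_X, pderiv_two,
      Pi.single_apply, Fin.isValue, Fin.reduceEq, reduceIte,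
      smul_eq_mul, smul_zero, mul_zero, zero_mul, mul_one, one_mul, add_zero, zero_add, neg_zero, sub_zero]
    ring
end
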